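/- Let d be a positive natural number, let f : ℝ^d → ℝ be twice continuously differentiable, let W* ∈ ℝ^d satisfy ∇f(W*) = 0, and let δ > 0 and U = {W : ‖W − W*‖ ≤ δ}. Assume the Hessian of f is L_H-Lipschitz on U in operator norm. Let H = ∇²f(W*), let W_Pre ∈ ℝ^d be fixed, and let θ be a random vector with W_Pre + θ ∈ U almost surely, mean μ = E[θ], and covariance matrix Σ = E[(θ − μ)(θ − μ)ᵀ]. Then E[f(W_Pre + θ)] − f(W*) ≤ (1/2)·(W_Pre + μ − W*)ᵀ H (W_Pre + μ − W*) + (1/2)·tr(H Σ) + (L_H/6)·δ·( ‖W_Pre + μ − W*‖² + tr(Σ) ). -/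

import Mathlib

open MeasureTheory Matrix

section aux

lemma euc_coord_le_norm {d : ℕ} (x : EuclideanSpace ℝ (Fin d)) (i : Fin d) : |x i| ≤ ‖x‖ := by
  have h2 : ‖x‖ = Real.sqrt (∑ j, x j ^ 2) := by
    rw [EuclideanSpace.norm_eq]; simp [Real.norm_eq_abs, sq_abs]
  rw [h2, ← Real.sqrt_sq_eq_abs]
  exact Real.sqrt_le_sqrt (Finset.single_le_sum (fun j _ => sq_nonneg (x j)) (Finset.mem_univ i))

lemma euc_normsq_eq_sum {d : ℕ} (x : EuclideanSpace ℝ (Fin d)) : ‖x‖^2 = ∑ i, x i ^ 2 := by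
  have h2 : ‖x‖ = Real.sqrt (∑ j, x j ^ 2) := by
    rw [EuclideanSpace.norm_eq]; simp [Real.norm_eq_abs, sq_abs]
  rw [h2, Real.sq_sqrt (Finset.sum_nonneg fun j _ => sq_nonneg (x j))]

lemma int_of_bdd {Ω : Type} [MeasureSpace Ω] [IsProbabilityMeasure (volume : Measure Ω)]
    {g : Ω → ℝ} (hm : AEStronglyMeasurable g (volume : Measure Ω)) {C : ℝ}
    (hb : ∀ᵐ ω, |g ω| ≤ C) : Integrable g :=
  Integrable.mono' (integrable_const C) hm (by simpa [Real.norm_eq_abs] using hb)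

lemma euc_sum_single_eq {d : ℕ} (x : EuclideanSpace ℝ (Fin d)) :
    x = ∑ i, (x i) • EuclideanSpace.single i (1:ℝ) := by
  ext j
  have h := map_sum (EuclideanSpace.proj j : EuclideanSpace ℝ (Fin d) →L[ℝ] ℝ)
    (fun i => (x i) • EuclideanSpace.single i (1:ℝ)) Finset.univ
  have h2 : (∑ i, (x i) • EuclideanSpace.single i (1:ℝ)) j
      = (EuclideanSpace.proj j : EuclideanSpace ℝ (Fin d) →L[ℝ] ℝ)
        (∑ i, (x i) • EuclideanSpace.single i (1:ℝ)) := rfl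
  rw [h2, h]
  simp [EuclideanSpace.single_apply]

lemma euc_bilin_expand {d : ℕ}
    (B : EuclideanSpace ℝ (Fin d) →L[ℝ] (EuclideanSpace ℝ (Fin d)) →L[ℝ] ℝ)
    (x y : EuclideanSpace ℝ (Fin d)) :
    B x y = ∑ i, ∑ j, B (EuclideanSpace.single i 1) (EuclideanSpace.single j 1) * x i * y j := by
  conv_lhs => rw [euc_sum_single_eq x, euc_sum_single_eq y]
  simp only [map_sum, ContinuousLinearMap.sum_apply, Finset.mul_sum]
  rw [Finset.sum_comm]
  refine Finset.sum_congr rfl fun i _ => Finset.sum_congr rfl fun j _ => ?_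
  rw [_root_.map_smul, _root_.map_smul B, ContinuousLinearMap.smul_apply,
    smul_eq_mul, smul_eq_mul]
  ring

lemma taylor_ptwise {d : ℕ} (f : EuclideanSpace ℝ (Fin d) → ℝ) (hf : ContDiff ℝ 2 f)
    (Wstar : EuclideanSpace ℝ (Fin d)) (hstat : fderiv ℝ f Wstar = 0)
    (δ LH : ℝ) (hδ : 0 < δ) (hLH : 0 ≤ LH)
    (hLip : ∀ x ∈ Metric.closedBall Wstar δ, ∀ y ∈ Metric.closedBall Wstar δ,
      ‖fderiv ℝ (fderiv ℝ f) x - fderiv ℝ (fderiv ℝ f) y‖ ≤ LH * ‖x - y‖)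
    (w : EuclideanSpace ℝ (Fin d)) (hw : w ∈ Metric.closedBall Wstar δ) :
    f w - f Wstar ≤ 1/2 * (fderiv ℝ (fderiv ℝ f) Wstar (w - Wstar) (w - Wstar))
      + LH * δ / 6 * ‖w - Wstar‖^2 := by
  set v := w - Wstar with hv
  set γ : ℝ → EuclideanSpace ℝ (Fin d) := fun t => Wstar + t • v with hγdef
  have hγmem : ∀ t ∈ Set.Icc (0:ℝ) 1, γ t ∈ Metric.closedBall Wstar δ := by
    intro t ht
    have hwd : ‖v‖ ≤ δ := by
      simpa [hv, dist_eq_norm] using Metric.mem_closedBall.mp hw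
    simp only [hγdef, Metric.mem_closedBall, dist_eq_norm, add_sub_cancel_left]
    rw [norm_smul, Real.norm_eq_abs, abs_of_nonneg ht.1]
    calc t * ‖v‖ ≤ 1 * δ := by
          apply mul_le_mul ht.2 hwd (norm_nonneg _) zero_le_one
      _ = δ := one_mul δ
  have hγd : ∀ t : ℝ, HasDerivAt γ v t := fun t => by
    have h := ((hasDerivAt_id t).smul_const v).const_add Wstar
    rw [one_smul] at h
    exact h
  set B : EuclideanSpace ℝ (Fin d) → (EuclideanSpace ℝ (Fin d)) →L[ℝ] (EuclideanSpace ℝ (Fin d)) →L[ℝ] ℝ :=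
    fderiv ℝ (fderiv ℝ f) with hBdef
  have h1 : ContDiff ℝ 1 (fderiv ℝ f) := hf.fderiv_right (by norm_num)
  have hBcont : Continuous B := ((hf.fderiv_right (m := 1) (by norm_num) |>.fderiv_right (m := 0) (by norm_num)).continuous : Continuous _)
  -- ψ
  set ψ : ℝ → ℝ := fun t => f (γ t) + (1 - t) * (fderiv ℝ f (γ t) v) with hψdef
  have hψd : ∀ t : ℝ, HasDerivAt ψ ((1 - t) * (B (γ t) v v)) t := by
    intro t
    have hφ : HasDerivAt (fun t => f (γ t)) (fderiv ℝ f (γ t) v) t := by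
      exact (hf.differentiable (by norm_num) (γ t)).hasFDerivAt.comp_hasDerivAt t (hγd t)
    have hφ1 : HasDerivAt (fun t => fderiv ℝ f (γ t) v) (B (γ t) v v) t := by
      have h2 : HasFDerivAt (fderiv ℝ f) (B (γ t)) (γ t) := (h1.differentiable (by norm_num) _).hasFDerivAt
      exact ((ContinuousLinearMap.apply ℝ ℝ v).hasFDerivAt.comp _ h2).comp_hasDerivAt t (hγd t)
    have := hφ.add ((((hasDerivAt_id t).const_sub 1).mul hφ1))
    refine this.congr_deriv ?_
    simp only [id]
    ring
  have hγc : Continuous γ := by fun_prop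
  have hq : Continuous fun t : ℝ => B (γ t) v v :=
    ((ContinuousLinearMap.apply ℝ ℝ v).continuous.comp
        (((ContinuousLinearMap.apply ℝ ((EuclideanSpace ℝ (Fin d)) →L[ℝ] ℝ) v).continuous.comp
          (hBcont.comp hγc)))).congr (by intro t; rfl)
  have hcont : Continuous (fun t : ℝ => (1 - t) * (B (γ t) v v)) :=
    (continuous_const.sub continuous_id).mul hq
  have hftc : ψ 1 - ψ 0 = ∫ t in (0:ℝ)..1, (1 - t) * (B (γ t) v v) :=
    (intervalIntegral.integral_eq_sub_of_hasDerivAt (fun t _ => hψd t)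
      (hcont.intervalIntegrable 0 1)).symm
  have hψ1 : ψ 1 = f w := by simp [hψdef, hγdef, hv]
  have hψ0 : ψ 0 = f Wstar := by simp [hψdef, hγdef, hstat]
  -- split the integral
  have hsplit : (∫ t in (0:ℝ)..1, (1 - t) * (B (γ t) v v))
      = (∫ t in (0:ℝ)..1, (1 - t) * (B (γ 0) v v))
        + ∫ t in (0:ℝ)..1, (1 - t) * ((B (γ t) v v) - (B (γ 0) v v)) := by
    rw [← intervalIntegral.integral_add]
    · congr 1; ext t; ring
    · exact ((continuous_const.sub continuous_id).mul continuous_const).intervalIntegrable 0 1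
    · exact ((continuous_const.sub continuous_id).mul (hq.sub continuous_const)).intervalIntegrable 0 1
  have hI1 : (∫ t in (0:ℝ)..1, (1 - t) * (B (γ 0) v v)) = 1/2 * (B (γ 0) v v) := by
    rw [intervalIntegral.integral_mul_const]
    have : (∫ t in (0:ℝ)..1, (1 - t)) = 1/2 := by
      rw [intervalIntegral.integral_sub intervalIntegrable_const
        (intervalIntegral.intervalIntegrable_id)]
      simp
      try norm_num
    rw [this]; try ring
  -- bound the remainder
  have hvδ : ‖v‖ ≤ δ := by simpa [hv, dist_eq_norm] using Metric.mem_closedBall.mp hw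
  have hRbound : |∫ t in (0:ℝ)..1, (1 - t) * ((B (γ t) v v) - (B (γ 0) v v))|
      ≤ LH * δ / 6 * ‖v‖^2 := by
    have hb : ∀ t ∈ Set.uIoc (0:ℝ) 1,
        ‖(1 - t) * ((B (γ t) v v) - (B (γ 0) v v))‖ ≤ (1 - t) * t * (LH * ‖v‖^3) := by
      intro t ht
      rw [Set.uIoc_of_le zero_le_one] at ht
      have ht0 : 0 < t := ht.1
      have ht1 : t ≤ 1 := ht.2
      have hmem : γ t ∈ Metric.closedBall Wstar δ := hγmem t ⟨le_of_lt ht0, ht1⟩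
      have hmem0 : γ 0 ∈ Metric.closedBall Wstar δ := hγmem 0 ⟨le_rfl, zero_le_one⟩
      have hdiff : (B (γ t) v v) - (B (γ 0) v v) = ((B (γ t) - B (γ 0)) v) v := by
        simp [ContinuousLinearMap.sub_apply]
      have hop : ‖((B (γ t) - B (γ 0)) v) v‖ ≤ ‖B (γ t) - B (γ 0)‖ * ‖v‖ * ‖v‖ := by
        calc ‖((B (γ t) - B (γ 0)) v) v‖ ≤ ‖(B (γ t) - B (γ 0)) v‖ * ‖v‖ :=
              ContinuousLinearMap.le_opNorm _ v
          _ ≤ ‖B (γ t) - B (γ 0)‖ * ‖v‖ * ‖v‖ := by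
              apply mul_le_mul_of_nonneg_right (ContinuousLinearMap.le_opNorm _ v) (norm_nonneg v)
      have hlip2 : ‖B (γ t) - B (γ 0)‖ ≤ LH * (t * ‖v‖) := by
        have := hLip (γ t) hmem (γ 0) hmem0
        have hγsub : γ t - γ 0 = t • v := by simp [hγdef]
        rw [hγsub] at this
        rw [norm_smul, Real.norm_eq_abs, abs_of_pos ht0] at this
        exact this
      rw [norm_mul, Real.norm_eq_abs ((1:ℝ) - t), abs_of_nonneg (by linarith : (0:ℝ) ≤ 1 - t)]
      rw [hdiff]
      calc (1 - t) * ‖((B (γ t) - B (γ 0)) v) v‖ ≤ (1 - t) * (‖B (γ t) - B (γ 0)‖ * ‖v‖ * ‖v‖) := by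
            apply mul_le_mul_of_nonneg_left hop (by linarith)
        _ ≤ (1 - t) * ((LH * (t * ‖v‖)) * ‖v‖ * ‖v‖) := by
            apply mul_le_mul_of_nonneg_left _ (by linarith)
            apply mul_le_mul_of_nonneg_right
              (mul_le_mul_of_nonneg_right hlip2 (norm_nonneg v)) (norm_nonneg v)
        _ = (1 - t) * t * (LH * ‖v‖^3) := by ring
    have hI6 : (∫ t in (0:ℝ)..1, (1 - t) * t * (LH * ‖v‖^3)) = LH * ‖v‖^3 / 6 := by
      rw [intervalIntegral.integral_mul_const]
      have : (∫ t in (0:ℝ)..1, (1 - t) * t) = 1/6 := by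
        have : (fun t : ℝ => (1 - t) * t) = fun t : ℝ => t - t^2 := by ext t; ring
        rw [this, intervalIntegral.integral_sub intervalIntegral.intervalIntegrable_id
          ((continuous_pow 2).intervalIntegrable 0 1)]
        simp [integral_pow]
        try norm_num
      rw [this]; try ring
    have hint : |∫ t in (0:ℝ)..1, (1 - t) * ((B (γ t) v v) - (B (γ 0) v v))|
        ≤ |∫ t in (0:ℝ)..1, (1 - t) * t * (LH * ‖v‖^3)| := by
      rw [← Real.norm_eq_abs]
      apply intervalIntegral.norm_integral_le_abs_of_norm_le _
        ((((continuous_const.sub continuous_id).mul continuous_id).mul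
          continuous_const).intervalIntegrable 0 1)
      filter_upwards [MeasureTheory.ae_restrict_mem measurableSet_uIoc] with t ht
      exact hb t ht
    rw [hI6] at hint
    rw [abs_of_nonneg (show (0:ℝ) ≤ LH * ‖v‖^3 / 6 from
      div_nonneg (mul_nonneg hLH (pow_nonneg (norm_nonneg v) 3)) (by norm_num))] at hint
    refine hint.trans ?_
    have h3 : ‖v‖^3 ≤ δ * ‖v‖^2 := by
      have := le_refl (0:ℝ)
      calc ‖v‖^3 = ‖v‖ * ‖v‖^2 := by ring
        _ ≤ δ * ‖v‖^2 := mul_le_mul_of_nonneg_right hvδ (sq_nonneg _)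
    calc LH * ‖v‖^3 / 6 ≤ LH * (δ * ‖v‖^2) / 6 := by
          apply div_le_div_of_nonneg_right _ (by norm_num)
          exact mul_le_mul_of_nonneg_left h3 hLH
      _ = LH * δ / 6 * ‖v‖^2 := by ring
  have hγ0 : γ 0 = Wstar := by simp [hγdef]
  have key : f w - f Wstar = 1/2 * (B Wstar v v)
      + ∫ t in (0:ℝ)..1, (1 - t) * ((B (γ t) v v) - (B (γ 0) v v)) := by
    rw [← hψ1, ← hψ0, hftc, hsplit, hI1, hγ0]
  rw [key, hBdef]
  have := abs_le.mp hRbound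
  linarith [this.2]


end aux

set_option maxHeartbeats 1000000 in
/-- Intermediate bound in the proof of Theorem 1 of the paper, before applying the
Hessian upper bound `H ⪯ L·I`.  Here `H = ∇²f(W*)` (as a matrix in the standard basis),
`Σ` is the covariance matrix of the random vector `θ`, and the Hessian of `f` is
`L_H`-Lipschitz (in operator norm) on the closed ball `U` of radius `δ` around the
stationary point `W*`. -/
theorem stmt_1 (d : ℕ) (hd : 0 < d)
    (f : EuclideanSpace ℝ (Fin d) → ℝ) (hf : ContDiff ℝ 2 f)
    (Wstar : EuclideanSpace ℝ (Fin d)) (hstat : fderiv ℝ f Wstar = 0)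
    (δ : ℝ) (hδ : 0 < δ) (LH : ℝ)
    (hLip : ∀ x ∈ Metric.closedBall Wstar δ, ∀ y ∈ Metric.closedBall Wstar δ,
      ‖fderiv ℝ (fderiv ℝ f) x - fderiv ℝ (fderiv ℝ f) y‖ ≤ LH * ‖x - y‖)
    (H : Matrix (Fin d) (Fin d) ℝ)
    (hH : H = Matrix.of fun i j =>
      fderiv ℝ (fderiv ℝ f) Wstar (EuclideanSpace.single i 1) (EuclideanSpace.single j 1))
    (WPre : EuclideanSpace ℝ (Fin d))
    {Ω : Type} [MeasureSpace Ω] [IsProbabilityMeasure (volume : Measure Ω)]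
    (θ : Ω → EuclideanSpace ℝ (Fin d)) (hθ : Measurable θ)
    (hbasin : ∀ᵐ ω, WPre + θ ω ∈ Metric.closedBall Wstar δ)
    (μ : EuclideanSpace ℝ (Fin d)) (hμ : μ = ∫ ω, θ ω)
    (Cov : Matrix (Fin d) (Fin d) ℝ)
    (hCov : Cov = Matrix.of fun i j => ∫ ω, (θ ω i - μ i) * (θ ω j - μ j)) :
    (∫ ω, f (WPre + θ ω)) - f Wstar ≤
      1 / 2 * ((WPre + μ - Wstar) ⬝ᵥ H.mulVec (WPre + μ - Wstar))
        + 1 / 2 * (H * Cov).trace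
        + LH / 6 * δ * (‖WPre + μ - Wstar‖ ^ 2 + Cov.trace) := by
  classical
  set B0 := fderiv ℝ (fderiv ℝ f) Wstar with hB0
  -- LH is nonnegative
  have hLH : 0 ≤ LH := by
    set u : EuclideanSpace ℝ (Fin d) := EuclideanSpace.single (⟨0, hd⟩ : Fin d) (1:ℝ) with hu
    have hnorm : ‖(Wstar + δ • u) - Wstar‖ = δ := by
      simp [hu, norm_smul, abs_of_pos hδ, EuclideanSpace.norm_single]
    have hmem : Wstar + δ • u ∈ Metric.closedBall Wstar δ := by
      simp only [Metric.mem_closedBall, dist_eq_norm]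
      rw [hnorm]
    have h := hLip _ hmem Wstar (Metric.mem_closedBall_self (le_of_lt hδ))
    rw [hnorm] at h
    nlinarith [norm_nonneg (fderiv ℝ (fderiv ℝ f) (Wstar + δ • u) - fderiv ℝ (fderiv ℝ f) Wstar)]
  set v : Ω → EuclideanSpace ℝ (Fin d) := fun ω => WPre + θ ω - Wstar with hvdef
  set m : EuclideanSpace ℝ (Fin d) := WPre + μ - Wstar with hmdef
  have hvmeas : Measurable v := by
    have hc : Continuous fun x : EuclideanSpace ℝ (Fin d) => WPre + x - Wstar := by fun_prop
    exact hc.measurable.comp hθ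
  have hvb : ∀ᵐ ω, ‖v ω‖ ≤ δ := by
    filter_upwards [hbasin] with ω h
    simpa [hvdef, dist_eq_norm] using h
  have hvi_meas : ∀ i, Measurable fun ω => v ω i := fun i =>
    (EuclideanSpace.proj (𝕜 := ℝ) i).continuous.measurable.comp hvmeas
  have hθi_meas : ∀ i, Measurable fun ω => θ ω i := fun i =>
    (EuclideanSpace.proj (𝕜 := ℝ) i).continuous.measurable.comp hθ
  have hθb : ∀ᵐ ω, ‖θ ω‖ ≤ δ + ‖Wstar - WPre‖ := by
    filter_upwards [hvb] with ω h
    have heq : θ ω = v ω + (Wstar - WPre) := by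
      simp only [hvdef]; abel
    calc ‖θ ω‖ = ‖v ω + (Wstar - WPre)‖ := by rw [← heq]
      _ ≤ ‖v ω‖ + ‖Wstar - WPre‖ := norm_add_le _ _
      _ ≤ δ + ‖Wstar - WPre‖ := by linarith
  have hθint : Integrable θ := Integrable.mono'
    (integrable_const (δ + ‖Wstar - WPre‖)) hθ.aestronglyMeasurable hθb
  have hμi : ∀ i, μ i = ∫ ω, θ ω i := fun i => by
    rw [hμ]; exact ((EuclideanSpace.proj (𝕜 := ℝ) i).integral_comp_comm hθint).symm
  have hθi_int : ∀ i, Integrable fun ω => θ ω i := fun i => by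
    refine int_of_bdd (hθi_meas i).aestronglyMeasurable (C := δ + ‖Wstar - WPre‖) ?_
    filter_upwards [hθb] with ω h
    exact (euc_coord_le_norm _ i).trans h
  have hvi : ∀ ω i, v ω i = m i + (θ ω i - μ i) := by
    intro ω i
    simp only [hvdef, hmdef, PiLp.add_apply, PiLp.sub_apply]
    ring
  have hvib : ∀ i, ∀ᵐ ω, |v ω i| ≤ δ := fun i => by
    filter_upwards [hvb] with ω h
    exact (euc_coord_le_norm _ i).trans h
  have hYmeas : ∀ i, Measurable fun ω => θ ω i - μ i := fun i =>
    (hθi_meas i).sub measurable_const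
  have hYb : ∀ i, ∀ᵐ ω, |θ ω i - μ i| ≤ δ + |m i| := fun i => by
    filter_upwards [hvib i] with ω h
    have heq : θ ω i - μ i = v ω i - m i := by
      have := hvi ω i; linarith
    rw [heq]
    calc |v ω i - m i| ≤ |v ω i| + |m i| := abs_sub _ _
      _ ≤ δ + |m i| := by linarith
  have hYint : ∀ i, Integrable fun ω => θ ω i - μ i := fun i =>
    int_of_bdd (hYmeas i).aestronglyMeasurable (hYb i)
  have hYzero : ∀ i, (∫ ω, (θ ω i - μ i)) = 0 := fun i => by
    rw [integral_sub (hθi_int i) (integrable_const _), integral_const]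
    simp [← hμi i]
  have hYYint : ∀ i j, Integrable fun ω => (θ ω i - μ i) * (θ ω j - μ j) := fun i j => by
    refine int_of_bdd ((hYmeas i).mul (hYmeas j)).aestronglyMeasurable
      (C := (δ + |m i|) * (δ + |m j|)) ?_
    filter_upwards [hYb i, hYb j] with ω h1 h2
    rw [abs_mul]
    exact mul_le_mul h1 h2 (abs_nonneg _) (by positivity)
  have hCovij : ∀ i j, Cov i j = ∫ ω, (θ ω i - μ i) * (θ ω j - μ j) := fun i j => by
    rw [hCov]; rfl
  have hCovsymm : ∀ i j, Cov j i = Cov i j := fun i j => by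
    rw [hCovij, hCovij]
    congr 1; ext ω; ring
  -- integrability of products of v coordinates
  have hvvint : ∀ i j, Integrable fun ω => v ω i * v ω j := fun i j => by
    refine int_of_bdd ((hvi_meas i).mul (hvi_meas j)).aestronglyMeasurable (C := δ * δ) ?_
    filter_upwards [hvib i, hvib j] with ω h1 h2
    rw [abs_mul]
    exact mul_le_mul h1 h2 (abs_nonneg _) (le_of_lt hδ)
  -- second moments
  have hIij : ∀ i j, (∫ ω, v ω i * v ω j) = m i * m j + Cov i j := by
    intro i j
    have hexp : (fun ω => v ω i * v ω j) = fun ω =>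
        m i * m j + (m i * (θ ω j - μ j) + (m j * (θ ω i - μ i)
          + (θ ω i - μ i) * (θ ω j - μ j))) := by
      ext ω; rw [hvi ω i, hvi ω j]; ring
    have hA : Integrable (fun ω => m i * (θ ω j - μ j)) := (hYint j).const_mul _
    have hB2 : Integrable (fun ω => m j * (θ ω i - μ i)) := (hYint i).const_mul _
    have hC : Integrable (fun ω => (θ ω i - μ i) * (θ ω j - μ j)) := hYYint i j
    have hBC : Integrable (fun ω => m j * (θ ω i - μ i)
        + (θ ω i - μ i) * (θ ω j - μ j)) := hB2.add hC
    have hint3 : Integrable (fun ω => m i * (θ ω j - μ j) + (m j * (θ ω i - μ i)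
        + (θ ω i - μ i) * (θ ω j - μ j))) := hA.add hBC
    have eA : (∫ ω, m i * (θ ω j - μ j)) = 0 := by
      rw [MeasureTheory.integral_const_mul, hYzero j, mul_zero]
    have eB : (∫ ω, m j * (θ ω i - μ i)) = 0 := by
      rw [MeasureTheory.integral_const_mul, hYzero i, mul_zero]
    calc (∫ ω, v ω i * v ω j)
        = ∫ ω, (m i * m j + (m i * (θ ω j - μ j) + (m j * (θ ω i - μ i)
            + (θ ω i - μ i) * (θ ω j - μ j)))) := by rw [hexp]
      _ = (∫ _ω : Ω, (m i * m j : ℝ)) + ∫ ω, (m i * (θ ω j - μ j) + (m j * (θ ω i - μ i)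
            + (θ ω i - μ i) * (θ ω j - μ j))) := integral_add (integrable_const _) hint3
      _ = (∫ _ω : Ω, (m i * m j : ℝ)) + ((∫ ω, m i * (θ ω j - μ j)) + ∫ ω, (m j * (θ ω i - μ i)
            + (θ ω i - μ i) * (θ ω j - μ j))) := by rw [integral_add hA hBC]
      _ = (∫ _ω : Ω, (m i * m j : ℝ)) + ((∫ ω, m i * (θ ω j - μ j)) + ((∫ ω, m j * (θ ω i - μ i))
            + ∫ ω, (θ ω i - μ i) * (θ ω j - μ j))) := by rw [integral_add hB2 hC]
      _ = m i * m j + Cov i j := by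
            rw [eA, eB, integral_const, ← hCovij i j]
            simp
  -- integrability of the quadratic form and squared norm
  have hQc : Continuous fun x : EuclideanSpace ℝ (Fin d) => B0 x x :=
    B0.continuous₂.comp (continuous_id.prodMk continuous_id)
  -- expansion of the quadratic form
  have hterm : ∀ ω, B0 (v ω) (v ω) = ∑ i, ∑ j, H i j * (v ω i * v ω j) := fun ω => by
    rw [euc_bilin_expand B0 (v ω) (v ω), hH]
    exact Finset.sum_congr rfl fun i _ => Finset.sum_congr rfl fun j _ => by
      simp only [Matrix.of_apply]; ring
  have hQint_sum : ∀ i, Integrable (fun ω => ∑ j, H i j * (v ω i * v ω j)) := fun i =>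
    integrable_finset_sum _ fun j _ => (hvvint i j).const_mul _
  have hD : (∫ ω, B0 (v ω) (v ω))
      = (m ⬝ᵥ H.mulVec m) + (H * Cov).trace := by
    calc (∫ ω, B0 (v ω) (v ω)) = ∫ ω, ∑ i, ∑ j, H i j * (v ω i * v ω j) := by
          exact integral_congr_ae (Filter.Eventually.of_forall hterm)
      _ = ∑ i, ∫ ω, ∑ j, H i j * (v ω i * v ω j) :=
          integral_finset_sum _ (fun i _ => hQint_sum i)
      _ = ∑ i, ∑ j, ∫ ω, H i j * (v ω i * v ω j) :=
          Finset.sum_congr rfl fun i _ =>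
            integral_finset_sum _ fun j _ => (hvvint i j).const_mul _
      _ = ∑ i, ∑ j, H i j * (m i * m j + Cov i j) := by
          refine Finset.sum_congr rfl fun i _ => Finset.sum_congr rfl fun j _ => ?_
          rw [MeasureTheory.integral_const_mul, hIij i j]
      _ = (m ⬝ᵥ H.mulVec m) + (H * Cov).trace := by
          simp only [mul_add, Finset.sum_add_distrib]
          congr 1
          · simp only [dotProduct, Matrix.mulVec, Finset.mul_sum]
            exact Finset.sum_congr rfl fun i _ => Finset.sum_congr rfl fun j _ => by ring
          · simp only [Matrix.trace, Matrix.diag, Matrix.mul_apply]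
            exact Finset.sum_congr rfl fun i _ => Finset.sum_congr rfl fun j _ => by
              rw [hCovsymm i j]
  have hE : (∫ ω, ‖v ω‖^2) = ‖m‖^2 + Cov.trace := by
    calc (∫ ω, ‖v ω‖^2) = ∫ ω, ∑ i, v ω i ^ 2 :=
          integral_congr_ae (Filter.Eventually.of_forall fun ω => euc_normsq_eq_sum (v ω))
      _ = ∑ i, ∫ ω, v ω i ^ 2 :=
          integral_finset_sum _ (fun i _ => by
            have := hvvint i i
            simpa [sq] using this)
      _ = ∑ i, (m i ^ 2 + Cov i i) := by
          refine Finset.sum_congr rfl fun i _ => ?_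
          have h := hIij i i
          calc (∫ ω, v ω i ^ 2) = ∫ ω, v ω i * v ω i := by
                exact integral_congr_ae (Filter.Eventually.of_forall fun ω => sq (v ω i))
            _ = m i * m i + Cov i i := h
            _ = m i ^ 2 + Cov i i := by ring
      _ = ‖m‖^2 + Cov.trace := by
          rw [Finset.sum_add_distrib, ← euc_normsq_eq_sum m]
          simp [Matrix.trace, Matrix.diag]
  -- integrability of f ∘ (WPre + θ)
  have hfmeas : Measurable fun ω => f (WPre + θ ω) :=
    hf.continuous.measurable.comp ((continuous_const.add continuous_id).measurable.comp hθ)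
  obtain ⟨z, hz, hzmax⟩ := (isCompact_closedBall Wstar δ).exists_isMaxOn
    ⟨Wstar, Metric.mem_closedBall_self hδ.le⟩
    ((continuous_abs.comp hf.continuous).continuousOn)
  have hfint : Integrable fun ω => f (WPre + θ ω) := by
    refine int_of_bdd hfmeas.aestronglyMeasurable (C := |f z|) ?_
    filter_upwards [hbasin] with ω h
    exact hzmax h
  have hQint : Integrable fun ω => B0 (v ω) (v ω) := by
    refine int_of_bdd ((hQc.measurable.comp hvmeas)).aestronglyMeasurable
      (C := ‖B0‖ * δ * δ) ?_
    filter_upwards [hvb] with ω h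
    have h1 : ‖(B0 (v ω)) (v ω)‖ ≤ ‖B0 (v ω)‖ * ‖v ω‖ := (B0 (v ω)).le_opNorm (v ω)
    have h2 : ‖B0 (v ω)‖ ≤ ‖B0‖ * ‖v ω‖ := B0.le_opNorm (v ω)
    rw [← Real.norm_eq_abs]
    have h3 : ‖B0 (v ω)‖ ≤ ‖B0‖ * δ := h2.trans (mul_le_mul_of_nonneg_left h (norm_nonneg B0))
    calc ‖(B0 (v ω)) (v ω)‖ ≤ ‖B0 (v ω)‖ * ‖v ω‖ := h1
      _ ≤ (‖B0‖ * δ) * δ := mul_le_mul h3 h (norm_nonneg _) (by positivity)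
  have hnint : Integrable fun ω => ‖v ω‖^2 := by
    have hc : Continuous fun x : EuclideanSpace ℝ (Fin d) => ‖x‖^2 := by fun_prop
    refine int_of_bdd (hc.measurable.comp hvmeas).aestronglyMeasurable (C := δ^2) ?_
    filter_upwards [hvb] with ω h
    rw [abs_of_nonneg (sq_nonneg _)]
    nlinarith [norm_nonneg (v ω)]
  -- main estimate
  have h0 : (∫ ω, f (WPre + θ ω)) - f Wstar = ∫ ω, (f (WPre + θ ω) - f Wstar) := by
    rw [integral_sub hfint (integrable_const _), integral_const]
    simp
  have hptw : ∀ᵐ ω, f (WPre + θ ω) - f Wstar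
      ≤ 1/2 * (B0 (v ω) (v ω)) + LH * δ / 6 * ‖v ω‖^2 := by
    filter_upwards [hbasin] with ω h
    exact taylor_ptwise f hf Wstar hstat δ LH hδ hLH hLip (WPre + θ ω) h
  have hsum_int : Integrable (fun ω => 1/2 * (B0 (v ω) (v ω)) + LH * δ / 6 * ‖v ω‖^2) :=
    (hQint.const_mul _).add (hnint.const_mul _)
  have hstep : (∫ ω, f (WPre + θ ω)) - f Wstar
      ≤ 1/2 * (∫ ω, B0 (v ω) (v ω)) + LH * δ / 6 * (∫ ω, ‖v ω‖^2) := by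
    rw [h0]
    calc (∫ ω, (f (WPre + θ ω) - f Wstar))
        ≤ ∫ ω, (1/2 * (B0 (v ω) (v ω)) + LH * δ / 6 * ‖v ω‖^2) :=
          integral_mono_ae (hfint.sub (integrable_const _)) hsum_int hptw
      _ = 1/2 * (∫ ω, B0 (v ω) (v ω)) + LH * δ / 6 * (∫ ω, ‖v ω‖^2) := by
          rw [integral_add (hQint.const_mul _) (hnint.const_mul _),
            MeasureTheory.integral_const_mul, MeasureTheory.integral_const_mul]
  calc (∫ ω, f (WPre + θ ω)) - f Wstar
      ≤ 1/2 * (∫ ω, B0 (v ω) (v ω)) + LH * δ / 6 * (∫ ω, ‖v ω‖^2) := hstep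
    _ = 1 / 2 * (m ⬝ᵥ H.mulVec m) + 1 / 2 * (H * Cov).trace
        + LH / 6 * δ * (‖m‖ ^ 2 + Cov.trace) := by
        rw [hD, hE]; ring
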